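/- Let F_q be a finite field, let d > 1 with gcd(d, q-1) = 1, let a ∈ F_q be nonzero, and let c ∈ F_q be nonzero. Let F(x) = x^d with inverse F⁻¹. Then the number of x ∈ F_q satisfying F⁻¹(c⁻¹·F(x+a)) - F⁻¹(c·F(x)) = a equals 1 if c² ≠ 1, equals 0 if c = -1 (and -1 ≠ 1 in F_q), and equals q if c = 1. -/
import Mathlib


theorem stmt11 (F : Type*) [Field F] [Fintype F]
    (d : ℕ) (hd : 1 < d) (hgcd : Nat.gcd d (Fintype.card F - 1) = 1)
    (Finv : F → F) (hFinv1 : ∀ x : F, Finv (x ^ d) = x) (hFinv2 : ∀ x : F, (Finv x) ^ d = x)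
    (a c : F) (ha : a ≠ 0) (hc : c ≠ 0) :
    (c ^ 2 ≠ 1 →
      Nat.card {x : F // Finv (c⁻¹ * (x + a) ^ d) - Finv (c * x ^ d) = a} = 1) ∧
    (c = -1 → (-1 : F) ≠ 1 →
      Nat.card {x : F // Finv (c⁻¹ * (x + a) ^ d) - Finv (c * x ^ d) = a} = 0) ∧
    (c = 1 →
      Nat.card {x : F // Finv (c⁻¹ * (x + a) ^ d) - Finv (c * x ^ d) = a}
        = Fintype.card F) := by
  have hmul : ∀ b x : F, Finv (b * x ^ d) = Finv b * x := by
    intro b x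
    calc Finv (b * x ^ d) = Finv ((Finv b * x) ^ d) := by rw [mul_pow, hFinv2]
    _ = Finv b * x := hFinv1 _
  set v := Finv c with hv
  set u := Finv c⁻¹ with hu
  have huv : u * v = 1 := by
    have : (u * v) ^ d = 1 := by rw [mul_pow, hFinv2, hFinv2, inv_mul_cancel₀ hc]
    have h1 : Finv ((u * v) ^ d) = Finv (1 ^ d) := by rw [this, one_pow]
    rwa [hFinv1, hFinv1] at h1
  have hveq : ∀ x : F, (Finv (c⁻¹ * (x + a) ^ d) - Finv (c * x ^ d) = a) ↔
      u * (x + a) - v * x = a := by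
    intro x; rw [hmul, hmul]
  have hvne : v ≠ 0 := by
    intro h
    apply hc
    rw [← hFinv2 c, ← hv, h, zero_pow (by omega)]
  refine ⟨?_, ?_, ?_⟩
  · intro hc2
    have hv2 : v ^ 2 ≠ 1 := by
      intro h
      apply hc2
      have : (v ^ 2) ^ d = 1 ^ d := by rw [h]
      rw [one_pow, ← pow_mul, mul_comm, pow_mul, hFinv2] at this
      exact this
    have h1v : (1 : F) + v ≠ 0 := by
      intro h
      apply hv2
      have : v = -1 := by linear_combination h
      rw [this]; ring
    have h1v' : (1 : F) - v ≠ 0 := by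
      intro h
      apply hv2
      have : v = 1 := by linear_combination -h
      rw [this]; ring
    have hueq : u = v⁻¹ := by field_simp at huv ⊢; linear_combination huv
    set x₀ : F := -a / (1 + v) with hx₀
    have key : ∀ x : F, (u * (x + a) - v * x = a) ↔ x = x₀ := by
      intro x
      constructor
      · intro h
        have h2 : x * (1 - v ^ 2) = a * (v - 1) := by
          linear_combination v * h - (x + a) * huv
        have h3 : x * (1 + v) = -a :=
          mul_right_cancel₀ h1v' (by linear_combination h2)
        rw [hx₀, eq_div_iff h1v]
        exact h3
      · intro h
        rw [hueq, h, hx₀]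
        field_simp
        ring
    haveI : Unique {x : F // Finv (c⁻¹ * (x + a) ^ d) - Finv (c * x ^ d) = a} := by
      refine ⟨⟨⟨x₀, ?_⟩⟩, ?_⟩
      · rw [hveq, key]
      · rintro ⟨y, hy⟩
        ext
        rw [hveq, key] at hy
        exact hy
    exact Nat.card_unique
  · intro hcm1 hne1
    have hvv : v ^ 2 = 1 := by
      have : u = v := by rw [hu, hv, hcm1]; norm_num
      rw [this] at huv; rw [sq]; exact huv
    have hvm1 : v = -1 := by
      have hfac : (v - 1) * (v + 1) = 0 := by linear_combination hvv
      rcases mul_eq_zero.mp hfac with h | h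
      · exfalso
        apply hne1
        have hv1 : v = 1 := by linear_combination h
        rw [← hcm1, ← hFinv2 c, ← hv, hv1, one_pow]
      · linear_combination h
    haveI : IsEmpty {x : F // Finv (c⁻¹ * (x + a) ^ d) - Finv (c * x ^ d) = a} := by
      constructor
      rintro ⟨x, hx⟩
      rw [hveq] at hx
      have hu' : u = -1 := by
        have : u * v = 1 := huv
        rw [hvm1] at this
        linear_combination -this
      rw [hu', hvm1] at hx
      have h2a : a * (1 + 1) = 0 := by linear_combination -hx
      rcases mul_eq_zero.mp h2a with h | h
      · exact ha h
      · exact hne1 (by linear_combination -h)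
    exact Nat.card_of_isEmpty
  · intro hc1
    have h1 : Finv (1:F) = 1 := by have := hFinv1 (1:F); rwa [one_pow] at this
    have hv1 : v = 1 := by rw [hv, hc1]; exact h1
    have hu1 : u = 1 := by rw [hv1, mul_one] at huv; exact huv
    have hall : ∀ x : F, Finv (c⁻¹ * (x + a) ^ d) - Finv (c * x ^ d) = a := by
      intro x
      rw [hveq, hu1, hv1]
      ring
    rw [Nat.card_congr (Equiv.subtypeUnivEquiv hall)]
    exact Nat.card_eq_fintype_card
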